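/- Given a strongly braided Rota–Baxter algebra (R, μ, P, σ) of weight λ, define x ≺_P y := xP(y) + λxy and x ≻_P y := P(x)y. Then (R, ≺_P, ≻_P, σ) is a braided dendriform algebra: the dendriform axioms hold and ≺_P, ≻_P are compatible with σ in the sense that σ(id⊗≺_P) = (≺_P⊗id)σ₂σ₁, σ(≺_P⊗id) = (id⊗≺_P)σ₁σ₂, and likewise for ≻_P. -/
import Mathlib

set_option maxHeartbeats 1000000
noncomputable section
open TensorProduct LinearMap

/-- `f ⊗ id` on a triple tensor product. -/
def op12 {k M : Type} [Field k] [AddCommGroup M] [Module k M]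
    (f : M ⊗[k] M →ₗ[k] M ⊗[k] M) : (M ⊗[k] M) ⊗[k] M →ₗ[k] (M ⊗[k] M) ⊗[k] M :=
  rTensor M f

/-- `id ⊗ f` on a triple tensor product. -/
def op23 {k M : Type} [Field k] [AddCommGroup M] [Module k M]
    (f : M ⊗[k] M →ₗ[k] M ⊗[k] M) : (M ⊗[k] M) ⊗[k] M →ₗ[k] (M ⊗[k] M) ⊗[k] M :=
  (TensorProduct.assoc k M M M).symm.toLinearMap ∘ₗ lTensor M f
    ∘ₗ (TensorProduct.assoc k M M M).toLinearMap

/-- `id ⊗ f ⊗ id` on a fourfold tensor product (`f` acting on the middle two factors). -/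
def midOp {k M : Type} [Field k] [AddCommGroup M] [Module k M]
    (f : M ⊗[k] M →ₗ[k] M ⊗[k] M) :
    (M ⊗[k] M) ⊗[k] (M ⊗[k] M) →ₗ[k] (M ⊗[k] M) ⊗[k] (M ⊗[k] M) :=
  (TensorProduct.assoc k M M (M ⊗[k] M)).symm.toLinearMap
    ∘ₗ lTensor M (TensorProduct.assoc k M M M).toLinearMap
    ∘ₗ lTensor M (rTensor M f)
    ∘ₗ lTensor M (TensorProduct.assoc k M M M).symm.toLinearMap
    ∘ₗ (TensorProduct.assoc k M M (M ⊗[k] M)).toLinearMap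


private theorem comp_congr_tail {k0 : Type*} [Semiring k0] {M1 M2 M3 M3' M4 : Type*}
    [AddCommMonoid M1] [AddCommMonoid M2] [AddCommMonoid M3] [AddCommMonoid M3']
    [AddCommMonoid M4] [Module k0 M1] [Module k0 M2] [Module k0 M3] [Module k0 M3']
    [Module k0 M4] {f : M3 →ₗ[k0] M4} {g : M2 →ₗ[k0] M3} {f' : M3' →ₗ[k0] M4}
    {g' : M2 →ₗ[k0] M3'} (h : f ∘ₗ g = f' ∘ₗ g') (t : M1 →ₗ[k0] M2) :
    f ∘ₗ g ∘ₗ t = f' ∘ₗ g' ∘ₗ t := by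
  rw [← LinearMap.comp_assoc, h, LinearMap.comp_assoc]

/-- A strongly braided Rota–Baxter algebra `(R, μ, P, σ)` of weight `λ`
gives a braided dendriform algebra `(R, ≺_P, ≻_P, σ)` with
`x ≺_P y = x P(y) + λ x y` and `x ≻_P y = P(x) y`. -/
theorem strongly_braided_RB_gives_braided_dendriform
    {k R : Type} [Field k] [AddCommGroup R] [Module k R]
    (lam : k)
    (mu : R ⊗[k] R →ₗ[k] R)
    (hassoc : mu ∘ₗ rTensor R mu
      = mu ∘ₗ lTensor R mu ∘ₗ (TensorProduct.assoc k R R R).toLinearMap)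
    (sg : R ⊗[k] R →ₗ[k] R ⊗[k] R)
    (hybe : op12 sg ∘ₗ op23 sg ∘ₗ op12 sg = op23 sg ∘ₗ op12 sg ∘ₗ op23 sg)
    (hba1 : lTensor R mu ∘ₗ (TensorProduct.assoc k R R R).toLinearMap ∘ₗ op12 sg ∘ₗ op23 sg
      = sg ∘ₗ rTensor R mu)
    (hba2 : rTensor R mu ∘ₗ op23 sg ∘ₗ op12 sg
      = sg ∘ₗ lTensor R mu ∘ₗ (TensorProduct.assoc k R R R).toLinearMap)
    (P : R →ₗ[k] R)
    (hrb : ∀ x y : R, mu (P x ⊗ₜ[k] P y)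
      = P (mu (x ⊗ₜ[k] P y)) + P (mu (P x ⊗ₜ[k] y)) + lam • P (mu (x ⊗ₜ[k] y)))
    (hright : sg ∘ₗ rTensor R P = lTensor R P ∘ₗ sg)
    (hleft : sg ∘ₗ lTensor R P = rTensor R P ∘ₗ sg) :
    -- the two products :
    let pl : R ⊗[k] R →ₗ[k] R := mu ∘ₗ lTensor R P + lam • mu   -- `≺_P`
    let pr : R ⊗[k] R →ₗ[k] R := mu ∘ₗ rTensor R P              -- `≻_P`
    -- dendriform axioms :
    (∀ x y z : R, pl (pl (x ⊗ₜ[k] y) ⊗ₜ[k] z) = pl (x ⊗ₜ[k] (pl (y ⊗ₜ[k] z) + pr (y ⊗ₜ[k] z))))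
    ∧ (∀ x y z : R, pl (pr (x ⊗ₜ[k] y) ⊗ₜ[k] z) = pr (x ⊗ₜ[k] pl (y ⊗ₜ[k] z)))
    ∧ (∀ x y z : R, pr (x ⊗ₜ[k] pr (y ⊗ₜ[k] z)) = pr ((pl (x ⊗ₜ[k] y) + pr (x ⊗ₜ[k] y)) ⊗ₜ[k] z))
    -- σ(id⊗≺_P) = (≺_P⊗id)σ₂σ₁ :
    ∧ sg ∘ₗ lTensor R pl ∘ₗ (TensorProduct.assoc k R R R).toLinearMap
        = rTensor R pl ∘ₗ op23 sg ∘ₗ op12 sg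
    -- σ(≺_P⊗id) = (id⊗≺_P)σ₁σ₂ :
    ∧ sg ∘ₗ rTensor R pl
        = lTensor R pl ∘ₗ (TensorProduct.assoc k R R R).toLinearMap ∘ₗ op12 sg ∘ₗ op23 sg
    -- σ(id⊗≻_P) = (≻_P⊗id)σ₂σ₁ :
    ∧ sg ∘ₗ lTensor R pr ∘ₗ (TensorProduct.assoc k R R R).toLinearMap
        = rTensor R pr ∘ₗ op23 sg ∘ₗ op12 sg
    -- σ(≻_P⊗id) = (id⊗≻_P)σ₁σ₂ :
    ∧ sg ∘ₗ rTensor R pr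
        = lTensor R pr ∘ₗ (TensorProduct.assoc k R R R).toLinearMap ∘ₗ op12 sg ∘ₗ op23 sg := by
  intro pl pr
  have hpl_def : pl = mu ∘ₗ lTensor R P + lam • mu := rfl
  have hpr_def : pr = mu ∘ₗ rTensor R P := rfl
  have hpl : ∀ a b : R, pl (a ⊗ₜ[k] b) = mu (a ⊗ₜ[k] P b) + lam • mu (a ⊗ₜ[k] b) := by
    intro a b; rw [hpl_def]; simp
  have hpr : ∀ a b : R, pr (a ⊗ₜ[k] b) = mu (P a ⊗ₜ[k] b) := by
    intro a b; rw [hpr_def]; simp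
  have hmu : ∀ x y z : R, mu (mu (x ⊗ₜ[k] y) ⊗ₜ[k] z) = mu (x ⊗ₜ[k] mu (y ⊗ₜ[k] z)) := by
    intro x y z
    simpa using LinearMap.congr_fun hassoc ((x ⊗ₜ[k] y) ⊗ₜ[k] z)
  -- assoc-conjugation lemmas (no sg involved)
  have e1 : (TensorProduct.assoc k R R R).toLinearMap ∘ₗ rTensor R (rTensor R P)
      = rTensor (R ⊗[k] R) P ∘ₗ (TensorProduct.assoc k R R R).toLinearMap := by
    ext x y z; simp
  have e1' : (TensorProduct.assoc k R R R).symm.toLinearMap ∘ₗ rTensor (R ⊗[k] R) P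
      = rTensor R (rTensor R P) ∘ₗ (TensorProduct.assoc k R R R).symm.toLinearMap := by
    ext x y z; simp
  have e2 : (TensorProduct.assoc k R R R).toLinearMap ∘ₗ rTensor R (lTensor R P)
      = lTensor R (rTensor R P) ∘ₗ (TensorProduct.assoc k R R R).toLinearMap := by
    ext x y z; simp
  have e3 : (TensorProduct.assoc k R R R).toLinearMap ∘ₗ lTensor (R ⊗[k] R) P
      = lTensor R (lTensor R P) ∘ₗ (TensorProduct.assoc k R R R).toLinearMap := by
    ext x y z; simp
  have cancel : (TensorProduct.assoc k R R R).toLinearMap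
      ∘ₗ (TensorProduct.assoc k R R R).symm.toLinearMap = LinearMap.id := by
    ext x y z; simp
  have cancel' : ∀ t : (R ⊗[k] R) ⊗[k] R →ₗ[k] R ⊗[k] (R ⊗[k] R),
      (TensorProduct.assoc k R R R).toLinearMap
        ∘ₗ (TensorProduct.assoc k R R R).symm.toLinearMap ∘ₗ t = t := by
    intro t; rw [← comp_assoc, cancel, id_comp]
  have op23_comp : ∀ f g : R ⊗[k] R →ₗ[k] R ⊗[k] R,
      op23 (f ∘ₗ g) = (op23 f : (R ⊗[k] R) ⊗[k] R →ₗ[k] (R ⊗[k] R) ⊗[k] R) ∘ₗ op23 g := by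
    intro f g
    simp only [op23, lTensor_comp, comp_assoc]
    rw [cancel' (lTensor R g ∘ₗ (TensorProduct.assoc k R R R).toLinearMap)]
  have idL3 : op23 (lTensor R P) = lTensor (R ⊗[k] R) P := by
    ext x y z; simp [op23]
  have idL2 : op23 (rTensor R P) = rTensor R (lTensor R P) := by
    ext x y z; simp [op23]
  -- basic commutations with sg
  have b12_3 : op12 sg ∘ₗ lTensor (R ⊗[k] R) P = lTensor (R ⊗[k] R) P ∘ₗ op12 sg := by
    ext x y z; simp [op12]
  have b12_2 : op12 sg ∘ₗ rTensor R (lTensor R P) = rTensor R (rTensor R P) ∘ₗ op12 sg := by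
    simp only [op12, ← rTensor_comp]; rw [hleft]
  have b12_1 : op12 sg ∘ₗ rTensor R (rTensor R P) = rTensor R (lTensor R P) ∘ₗ op12 sg := by
    simp only [op12, ← rTensor_comp]; rw [hright]
  have b23_3 : op23 sg ∘ₗ lTensor (R ⊗[k] R) P = rTensor R (lTensor R P) ∘ₗ op23 sg := by
    rw [← idL3, ← op23_comp, hleft, op23_comp, idL2]
  have b23_2 : op23 sg ∘ₗ rTensor R (lTensor R P) = lTensor (R ⊗[k] R) P ∘ₗ op23 sg := by
    rw [← idL2, ← op23_comp, hright, op23_comp, idL3]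
  have q1 : lTensor R sg ∘ₗ rTensor (R ⊗[k] R) P
      = rTensor (R ⊗[k] R) P ∘ₗ lTensor R sg := by
    ext x y z; simp
  have b23_1 : op23 sg ∘ₗ rTensor R (rTensor R P) = rTensor R (rTensor R P) ∘ₗ op23 sg := by
    simp only [op23, comp_assoc]
    rw [e1, comp_congr_tail q1 (TensorProduct.assoc k R R R).toLinearMap,
      comp_congr_tail e1' (lTensor R sg ∘ₗ (TensorProduct.assoc k R R R).toLinearMap)]
  -- composite commutations
  have K3 : op23 sg ∘ₗ op12 sg ∘ₗ lTensor (R ⊗[k] R) P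
      = rTensor R (lTensor R P) ∘ₗ op23 sg ∘ₗ op12 sg := by
    rw [b12_3, comp_congr_tail b23_3 (op12 sg)]
  have K2 : op23 sg ∘ₗ op12 sg ∘ₗ rTensor R (lTensor R P)
      = rTensor R (rTensor R P) ∘ₗ op23 sg ∘ₗ op12 sg := by
    rw [b12_2, comp_congr_tail b23_1 (op12 sg)]
  have K1 : op12 sg ∘ₗ op23 sg ∘ₗ rTensor R (rTensor R P)
      = rTensor R (lTensor R P) ∘ₗ op12 sg ∘ₗ op23 sg := by
    rw [b23_1, comp_congr_tail b12_1 (op23 sg)]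
  have K2' : op12 sg ∘ₗ op23 sg ∘ₗ rTensor R (lTensor R P)
      = lTensor (R ⊗[k] R) P ∘ₗ op12 sg ∘ₗ op23 sg := by
    rw [b23_2, comp_congr_tail b12_3 (op23 sg)]
  refine ⟨?_, ?_, ?_, ?_, ?_, ?_, ?_⟩
  · -- dendriform 1
    intro x y z
    simp only [hpl, hpr, map_add, map_smul, add_tmul, tmul_add, tmul_smul, ← smul_tmul',
      smul_add, smul_smul]
    simp only [hmu]
    rw [hrb y z]
    simp only [tmul_add, tmul_smul, map_add, map_smul, smul_add, smul_smul]
    module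
  · -- dendriform 2
    intro x y z
    simp only [hpl, hpr, map_add, map_smul, add_tmul, tmul_add, tmul_smul, ← smul_tmul',
      smul_add, smul_smul, hmu]
  · -- dendriform 3
    intro x y z
    simp only [hpl, hpr, map_add, map_smul, add_tmul, tmul_add, tmul_smul, ← smul_tmul',
      smul_add, smul_smul]
    rw [← hmu, hrb x y]
    simp only [add_tmul, tmul_add, tmul_smul, ← smul_tmul', map_add, map_smul, smul_add,
      smul_smul]
    module
  · -- sigma(id ⊗ pl)
    rw [hpl_def]
    have h1 : sg ∘ₗ lTensor R (mu ∘ₗ lTensor R P + lam • mu)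
          ∘ₗ (TensorProduct.assoc k R R R).toLinearMap
        = (sg ∘ₗ lTensor R mu ∘ₗ (TensorProduct.assoc k R R R).toLinearMap)
            ∘ₗ lTensor (R ⊗[k] R) P
          + lam • (sg ∘ₗ lTensor R mu ∘ₗ (TensorProduct.assoc k R R R).toLinearMap) := by
      ext x y z; simp [tmul_add, tmul_smul]
    rw [h1, ← hba2]
    simp only [rTensor_add, rTensor_smul, rTensor_comp, add_comp, smul_comp, comp_assoc]
    rw [K3]
  · -- sigma(pl ⊗ id)
    rw [hpl_def]
    have h1 : sg ∘ₗ rTensor R (mu ∘ₗ lTensor R P + lam • mu)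
        = (sg ∘ₗ rTensor R mu) ∘ₗ rTensor R (lTensor R P) + lam • (sg ∘ₗ rTensor R mu) := by
      ext x y z; simp [add_tmul, tmul_smul, ← smul_tmul']
    rw [h1, ← hba1]
    simp only [lTensor_add, lTensor_smul, lTensor_comp, add_comp, smul_comp, comp_assoc]
    rw [K2', comp_congr_tail e3 (op12 sg ∘ₗ op23 sg)]
  · -- sigma(id ⊗ pr)
    rw [hpr_def]
    have h1 : sg ∘ₗ lTensor R (mu ∘ₗ rTensor R P)
          ∘ₗ (TensorProduct.assoc k R R R).toLinearMap
        = (sg ∘ₗ lTensor R mu ∘ₗ (TensorProduct.assoc k R R R).toLinearMap)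
            ∘ₗ rTensor R (lTensor R P) := by
      ext x y z; simp
    rw [h1, ← hba2]
    simp only [rTensor_comp, comp_assoc]
    rw [K2]
  · -- sigma(pr ⊗ id)
    rw [hpr_def]
    have h1 : sg ∘ₗ rTensor R (mu ∘ₗ rTensor R P)
        = (sg ∘ₗ rTensor R mu) ∘ₗ rTensor R (rTensor R P) := by
      ext x y z; simp
    rw [h1, ← hba1]
    simp only [lTensor_comp, comp_assoc]
    rw [K1, comp_congr_tail e2 (op12 sg ∘ₗ op23 sg)]
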